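/- There exists a constant C > 0 such that the following holds. Let G be a finite abelian group, B ⊆ G a regular Bohr set of rank r, ρ ∈ (0,1), and ν : G → ℝ_{≥0} a probability density (E_{x∈G} ν(x) = 1) supported on B_ρ. Then for every f : G → ℝ, |⟨f ∗ ν, μ_B⟩ − ⟨f, μ_B⟩| ≤ C · ‖f‖_∞ · ρ r. -/
import Mathlib


open scoped BigOperators Classical

noncomputable section

namespace SkewPaper

variable {G : Type*}

/-- Expectation (average) of `f` over a finite type: `E[f] = (1/|G|) ∑ x, f x`. -/
def expect [Fintype G] (f : G → ℝ) : ℝ := (∑ x, f x) / (Fintype.card G)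

/-- Normalized inner product `⟨f, g⟩ = E_{x∈G} f(x) g(x)`. -/
def inprod [Fintype G] (f g : G → ℝ) : ℝ := expect (fun x => f x * g x)

/-- Convolution `(f ∗ g)(x) = E_{y∈G} f(y) g(x − y)`. -/
def conv [Fintype G] [AddCommGroup G] (f g : G → ℝ) : G → ℝ :=
  fun x => expect (fun y => f y * g (x - y))

/-- Difference convolution `(f ∘ g)(x) = E_{y∈G} f(y) g(x + y)`. -/
def dconv [Fintype G] [AddCommGroup G] (f g : G → ℝ) : G → ℝ :=
  fun x => expect (fun y => f y * g (x + y))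

/-- Indicator function `1_A` of a set `A`. -/
def ind (A : Set G) : G → ℝ := Set.indicator A (fun _ => (1 : ℝ))

/-- Normalized indicator `μ_A = (|G|/|A|) · 1_A`. -/
def muSet [Fintype G] (A : Set G) : G → ℝ :=
  fun x => ((Fintype.card G : ℝ) / (Nat.card A : ℝ)) * ind A x

/-- `μ_f = f / E[f]`, the normalization of `f` to have mean 1. -/
def muFun [Fintype G] (f : G → ℝ) : G → ℝ := fun x => f x / expect f

/-- Weighted `L^p` norm `‖f‖_{p(ν)} = (E_x ν(x) |f(x)|^p)^{1/p}`. -/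
def wnorm [Fintype G] (p : ℕ) (ν f : G → ℝ) : ℝ :=
  (expect (fun x => ν x * |f x| ^ p)) ^ ((p : ℝ)⁻¹)

/-- `L^p` norm with respect to the uniform measure. -/
def pnorm [Fintype G] (p : ℕ) (f : G → ℝ) : ℝ := wnorm p (fun _ => 1) f

/-- Sup norm `‖f‖_∞`. -/
def supNorm (f : G → ℝ) : ℝ := ⨆ x, |f x|

/-- `A` is skew-corner-free: it contains no nontrivial skew corner
`(x,y), (x,y+h), (x+h,y')` with `h ≠ 0`. -/
def IsSkewCornerFree [AddCommGroup G] (A : Set (G × G)) : Prop :=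
  ∀ x y y' h : G, (x, y) ∈ A → (x, y + h) ∈ A → (x + h, y') ∈ A → h = 0

/-- The set of quadruples `(x, y, y', h)` forming a skew corner of `A`. -/
def skewCorners [AddCommGroup G] (A : Set (G × G)) : Set (G × G × G × G) :=
  {q | (q.1, q.2.1) ∈ A ∧ (q.1, q.2.1 + q.2.2.2) ∈ A ∧ (q.1 + q.2.2.2, q.2.2.1) ∈ A}

/-- The column `A_x = {y : (x,y) ∈ A}`. -/
def col (A : Set (G × G)) (x : G) : Set G := {y | (x, y) ∈ A}

/-- A Bohr set datum: a finite frequency set of characters together with a width. -/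
structure BohrSet (G : Type*) [AddCommGroup G] where
  freq : Finset (AddChar G ℂ)
  width : ℝ

namespace BohrSet

variable [AddCommGroup G]

/-- The underlying set `Bohr(Γ, φ) = {x : |1 − γ(x)| ≤ φ for all γ ∈ Γ}`. -/
def toSet (B : BohrSet G) : Set G :=
  {x | ∀ γ ∈ B.freq, ‖(1 : ℂ) - γ x‖ ≤ B.width}

/-- The rank `|Γ|` of a Bohr set. -/
def rank (B : BohrSet G) : ℕ := B.freq.card

/-- The dilate `B_ρ = Bohr(Γ, ρφ)`. -/
def dilate (B : BohrSet G) (ρ : ℝ) : BohrSet G := ⟨B.freq, ρ * B.width⟩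

/-- `B'` is a sub-Bohr set of `B` (written `B' ≤ B`): its frequency set contains
that of `B` and its width is at most that of `B`. -/
def Sub (B' B : BohrSet G) : Prop := B.freq ⊆ B'.freq ∧ B'.width ≤ B.width

/-- A Bohr set of rank `r` is regular if for all `0 ≤ κ ≤ 1/(100r)`,
`|B_{1+κ}| ≤ (1+100κr)|B|` and `|B_{1−κ}| ≥ (1−100κr)|B|`. -/
def IsRegular (B : BohrSet G) : Prop :=
  ∀ κ : ℝ, 0 ≤ κ → κ ≤ 1 / (100 * B.rank) →
    ((Nat.card (B.dilate (1 + κ)).toSet : ℝ) ≤ (1 + 100 * κ * B.rank) * (Nat.card B.toSet : ℝ) ∧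
     (Nat.card (B.dilate (1 - κ)).toSet : ℝ) ≥ (1 - 100 * κ * B.rank) * (Nat.card B.toSet : ℝ))

/-- The density `μ(B) = |B|/|G|`. -/
def measure [Fintype G] (B : BohrSet G) : ℝ := (Nat.card B.toSet : ℝ) / (Fintype.card G : ℝ)

/-- The normalized indicator measure `μ_B`. -/
def mu [Fintype G] (B : BohrSet G) : G → ℝ := muSet B.toSet

end BohrSet


/-- (r, λ)-simultaneously spread collection of subsets of 𝔽_q^n. -/
def SimSpread {F : Type*} [Field F] [Fintype F] {n : ℕ} {ι : Type*} [Fintype ι]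
    (A : ι → Set (Fin n → F)) (r : ℕ) (lam : ℝ) : Prop :=
  ∀ V : Submodule F (Fin n → F), n ≤ Module.finrank F V + r →
    ∀ x : ι → Fin n → F,
      ∑ i, ((Nat.card ↥(((fun a => a - x i) '' A i) ∩ (V : Set (Fin n → F))) : ℝ) /
            (Nat.card (V : Set (Fin n → F)) : ℝ)) ^ 2 ≤
        lam * ∑ i, ((Nat.card (A i) : ℝ) / ((Fintype.card F : ℝ) ^ n)) ^ 2

/-- (r, λ)-simultaneously spread in an ambient subspace `W`. -/
def SimSpreadIn {F : Type*} [Field F] [Fintype F] {n : ℕ} {ι : Type*} [Fintype ι]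
    (W : Submodule F (Fin n → F)) (A : ι → Set (Fin n → F)) (r : ℕ) (lam : ℝ) : Prop :=
  ∀ V : Submodule F (Fin n → F), V ≤ W → Module.finrank F W ≤ Module.finrank F V + r →
    ∀ x : ι → Fin n → F, (∀ i, x i ∈ W) →
      ∑ i, ((Nat.card ↥(((fun a => a - x i) '' A i) ∩ (V : Set (Fin n → F))) : ℝ) /
            (Nat.card (V : Set (Fin n → F)) : ℝ)) ^ 2 ≤
        lam * ∑ i, ((Nat.card (A i) : ℝ) / (Nat.card (W : Set (Fin n → F)) : ℝ)) ^ 2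

/-- (r, δ, λ)-simultaneously spread collection of subsets of a regular Bohr set `B`. -/
def SimSpreadBohr {G : Type*} [AddCommGroup G] [Fintype G] {ι : Type*} [Fintype ι]
    (B : BohrSet G) (A : ι → Set G) (r : ℕ) (δ lam : ℝ) : Prop :=
  ∀ B' : BohrSet G, B'.Sub B → B'.IsRegular → B'.rank ≤ B.rank + r →
    δ * B.measure ≤ B'.measure →
    ∀ x : ι → G,
      ∑ i, ((Nat.card ↥(((fun a => a - x i) '' A i) ∩ B'.toSet) : ℝ) /
            (Nat.card B'.toSet : ℝ)) ^ 2 ≤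
        lam * ∑ i, ((Nat.card (A i) : ℝ) / (Nat.card B.toSet : ℝ)) ^ 2

section Helpers
variable {G : Type*} [AddCommGroup G] [Fintype G]

lemma key_complex (a b : ℂ) (ha : ‖a‖ = 1) : ‖1 - a*b‖ ≤ ‖1-a‖ + ‖1-b‖ := by
  have h : (1 : ℂ) - a*b = (1-a) + a*(1-b) := by ring
  rw [h]
  calc ‖(1-a) + a*(1-b)‖ ≤ ‖1-a‖ + ‖a*(1-b)‖ := norm_add_le _ _
    _ = ‖1-a‖ + ‖1-b‖ := by rw [norm_mul, ha, one_mul]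

lemma norm_char_neg (γ : AddChar G ℂ) (t : G) : ‖1 - γ (-t)‖ = ‖1 - γ t‖ := by
  have h : (1 : ℂ) - γ t = -(γ t * ((1:ℂ) - γ (-t))) := by
    have h2 := AddChar.map_add_eq_mul γ t (-t)
    rw [add_neg_cancel, AddChar.map_zero_eq_one] at h2
    rw [mul_sub, mul_one, ← h2]; ring
  rw [show (1:ℂ) - γ t = -(γ t * ((1:ℂ) - γ (-t))) from h, norm_neg, norm_mul,
    AddChar.norm_apply, one_mul]

lemma nat_card_set (A : Set G) : (Nat.card A : ℕ) = A.toFinset.card :=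
  Nat.card_eq_card_toFinset A

lemma inprod_mu (A : Set G) (g : G → ℝ) :
    inprod g (muSet A) = (∑ x ∈ A.toFinset, g x) / (Nat.card A : ℝ) := by
  have hn : (Fintype.card G : ℝ) ≠ 0 := Nat.cast_ne_zero.2 Fintype.card_ne_zero
  unfold inprod expect muSet
  have h1 : ∀ x : G, g x * ((Fintype.card G : ℝ) / (Nat.card A : ℝ) * ind A x)
      = ((Fintype.card G : ℝ) / (Nat.card A : ℝ)) * (if x ∈ A.toFinset then g x else 0) := by
    intro x
    by_cases hx : x ∈ A
    · simp [ind, Set.indicator_of_mem hx, hx]; ring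
    · simp [ind, Set.indicator_of_notMem hx, hx]
  rw [Finset.sum_congr rfl (fun x _ => h1 x), ← Finset.mul_sum, Finset.sum_ite_mem,
    Finset.univ_inter]
  rw [div_mul_eq_mul_div, div_div, mul_comm ((Nat.card ↑A : ℝ))]
  exact mul_div_mul_left _ _ hn

lemma sum_sandwich (f : G → ℝ) (M : ℝ) (hM : ∀ x, |f x| ≤ M) {S L U : Finset G}
    (hLS : L ⊆ S) (hSU : S ⊆ U) :
    |∑ x ∈ S, f x - ∑ x ∈ L, f x| ≤ M * ((U.card : ℝ) - L.card) := by
  rw [← Finset.sum_sdiff_eq_sub hLS]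
  calc |∑ x ∈ S \ L, f x| ≤ ∑ x ∈ S \ L, |f x| := Finset.abs_sum_le_sum_abs _ _
    _ ≤ ∑ _x ∈ S \ L, M := Finset.sum_le_sum (fun x _ => hM x)
    _ = M * ((S \ L).card : ℝ) := by rw [Finset.sum_const, nsmul_eq_mul]; ring
    _ ≤ M * ((U.card : ℝ) - L.card) := by
        have hM0 : 0 ≤ M := le_trans (abs_nonneg _) (hM (0 : G))
        apply mul_le_mul_of_nonneg_left _ hM0
        rw [Finset.card_sdiff_of_subset hLS]
        push_cast [Nat.cast_sub (Finset.card_le_card hLS)]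
        have h : (S.card : ℝ) ≤ U.card := by exact_mod_cast Finset.card_le_card hSU
        linarith

lemma reindex_sub (x : G) (f ν : G → ℝ) :
    ∑ y, f y * ν (x - y) = ∑ t, ν t * f (x - t) := by
  refine (Fintype.sum_equiv (Equiv.subLeft x) _ _ fun t => ?_).symm
  simp [Equiv.subLeft]
  ring

lemma inclusions (B : BohrSet G) (ρ : ℝ) (hρ : 0 ≤ ρ) (hne : B.toSet.Nonempty) (t : G)
    (ht : t ∈ (B.dilate ρ).toSet) :
    ((B.dilate (1-ρ)).toSet ⊆ B.toSet) ∧ (B.toSet ⊆ (B.dilate (1+ρ)).toSet) ∧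
    (∀ u, u ∈ (B.dilate (1-ρ)).toSet → u + t ∈ B.toSet) ∧
    (∀ u, u + t ∈ B.toSet → u ∈ (B.dilate (1+ρ)).toSet) := by
  obtain ⟨x₀, hx₀⟩ := hne
  have hw : ∀ γ ∈ B.freq, (0:ℝ) ≤ B.width := fun γ hγ =>
    le_trans (norm_nonneg _) (hx₀ γ hγ)
  have htγ : ∀ γ ∈ B.freq, ‖(1:ℂ) - γ t‖ ≤ ρ * B.width := ht
  refine ⟨?_, ?_, ?_, ?_⟩
  · intro u hu γ hγ
    have h1 := hu γ hγ
    have h2 := hw γ hγ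
    have : (1-ρ) * B.width ≤ B.width := by nlinarith
    exact le_trans h1 this
  · intro u hu γ hγ
    have h1 := hu γ hγ
    have h2 := hw γ hγ
    have : B.width ≤ (1+ρ) * B.width := by nlinarith
    exact le_trans h1 this
  · intro u hu γ hγ
    have h1 : ‖(1:ℂ) - γ u‖ ≤ (1-ρ) * B.width := hu γ hγ
    have h2 := htγ γ hγ
    have h3 : ‖(1:ℂ) - γ (u+t)‖ ≤ ‖(1:ℂ) - γ u‖ + ‖(1:ℂ) - γ t‖ := by
      rw [AddChar.map_add_eq_mul]
      exact key_complex _ _ (AddChar.norm_apply _ _)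
    calc ‖(1:ℂ) - γ (u+t)‖ ≤ (1-ρ) * B.width + ρ * B.width := by linarith
      _ = B.width := by ring
  · intro u hu γ hγ
    have h1 := hu γ hγ
    have h2 := htγ γ hγ
    have h3 : ‖(1:ℂ) - γ u‖ ≤ ‖(1:ℂ) - γ (u+t)‖ + ‖(1:ℂ) - γ t‖ := by
      have h4 : γ u = γ (u+t) * γ (-t) := by
        rw [← AddChar.map_add_eq_mul, add_assoc, add_neg_cancel, add_zero]
      rw [h4]
      calc ‖(1:ℂ) - γ (u+t) * γ (-t)‖ ≤ ‖(1:ℂ) - γ (u+t)‖ + ‖(1:ℂ) - γ (-t)‖ :=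
            key_complex _ _ (AddChar.norm_apply _ _)
        _ = ‖(1:ℂ) - γ (u+t)‖ + ‖(1:ℂ) - γ t‖ := by rw [norm_char_neg]
    calc ‖(1:ℂ) - γ u‖ ≤ B.width + ρ * B.width := by linarith
      _ = (1+ρ) * B.width := by ring

end Helpers

theorem statement5 :
    ∃ C : ℝ, 0 < C ∧ ∀ (G : Type) [AddCommGroup G] [Fintype G],
      ∀ B : BohrSet G, B.IsRegular →
      ∀ ρ : ℝ, 0 < ρ → ρ < 1 →
      ∀ ν : G → ℝ, (∀ x, 0 ≤ ν x) → expect ν = 1 →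
        (∀ x, x ∉ (B.dilate ρ).toSet → ν x = 0) →
      ∀ f : G → ℝ,
        |inprod (conv f ν) B.mu - inprod f B.mu| ≤ C * supNorm f * (ρ * B.rank) := by
  refine ⟨400, by norm_num, ?_⟩
  intro G _ _ B hreg ρ hρ0 hρ1 ν hν0 hν1 hνsupp f
  have hn : (0:ℝ) < (Fintype.card G : ℝ) := by exact_mod_cast Fintype.card_pos
  have hsup : ∀ x, |f x| ≤ supNorm f := by
    intro x
    unfold supNorm
    exact le_ciSup (f := fun x => |f x|) (Set.Finite.bddAbove (Set.finite_range _)) x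
  have hsup0 : 0 ≤ supNorm f := le_trans (abs_nonneg _) (hsup 0)
  have hrhs0 : 0 ≤ 400 * supNorm f * (ρ * B.rank) := by positivity
  have hmu : ∀ g : G → ℝ,
      inprod g B.mu = (∑ x ∈ B.toSet.toFinset, g x) / (Nat.card B.toSet : ℝ) :=
    fun g => inprod_mu B.toSet g
  by_cases hK : (Nat.card B.toSet : ℝ) = 0
  · have hempty : B.toSet.toFinset = ∅ := by
      apply Finset.card_eq_zero.mp
      rw [← nat_card_set]
      exact_mod_cast hK
    rw [hmu, hmu]
    simpa [hempty] using hrhs0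
  have hK0 : (0:ℝ) < (Nat.card B.toSet : ℝ) :=
    lt_of_le_of_ne (Nat.cast_nonneg _) (Ne.symm hK)
  have hne : B.toSet.Nonempty := by
    apply Set.toFinset_nonempty.mp
    apply Finset.card_pos.mp
    rw [← nat_card_set]
    exact_mod_cast hK0
  have hνsum : ∑ t, ν t = (Fintype.card G : ℝ) := by
    unfold expect at hν1
    rwa [div_eq_one_iff_eq hn.ne'] at hν1
  set Sig : G → ℝ := fun t => ∑ x ∈ B.toSet.toFinset, f (x - t) with hSig
  have hSig0 : Sig 0 = ∑ x ∈ B.toSet.toFinset, f x := by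
    simp [hSig]
  have hconv : inprod (conv f ν) B.mu
      = ((∑ t, ν t * Sig t) / (Fintype.card G : ℝ)) / (Nat.card B.toSet : ℝ) := by
    rw [hmu]
    congr 1
    calc ∑ x ∈ B.toSet.toFinset, conv f ν x
        = ∑ x ∈ B.toSet.toFinset, (∑ t, ν t * f (x - t)) / (Fintype.card G : ℝ) := by
          refine Finset.sum_congr rfl fun x _ => ?_
          unfold conv expect
          rw [reindex_sub]
      _ = (∑ x ∈ B.toSet.toFinset, ∑ t, ν t * f (x - t)) / (Fintype.card G : ℝ) := by
          rw [Finset.sum_div]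
      _ = (∑ t, ∑ x ∈ B.toSet.toFinset, ν t * f (x - t)) / (Fintype.card G : ℝ) := by
          rw [Finset.sum_comm]
      _ = (∑ t, ν t * Sig t) / (Fintype.card G : ℝ) := by
          congr 1
          exact Finset.sum_congr rfl fun t _ => (Finset.mul_sum _ _ _).symm
  have hf0 : inprod f B.mu = Sig 0 / (Nat.card B.toSet : ℝ) := by
    rw [hmu, hSig0]
  have hdiff : inprod (conv f ν) B.mu - inprod f B.mu
      = (∑ t, ν t * (Sig t - Sig 0)) / ((Fintype.card G : ℝ) * (Nat.card B.toSet : ℝ)) := by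
    have hs : ∑ t, ν t * (Sig t - Sig 0)
        = (∑ t, ν t * Sig t) - (Fintype.card G : ℝ) * Sig 0 := by
      simp only [mul_sub]
      rw [Finset.sum_sub_distrib, ← Finset.sum_mul, hνsum]
    rw [hconv, hf0, hs, sub_div, div_div, mul_div_mul_left _ _ hn.ne']
  have hnK : (0:ℝ) < (Fintype.card G : ℝ) * (Nat.card B.toSet : ℝ) := mul_pos hn hK0
  -- main continuation, given the card difference bound
  have main : ((Nat.card (B.dilate (1+ρ)).toSet : ℝ) - (Nat.card (B.dilate (1-ρ)).toSet : ℝ)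
        ≤ 200 * (ρ * B.rank) * (Nat.card B.toSet : ℝ)) →
      |inprod (conv f ν) B.mu - inprod f B.mu| ≤ 400 * supNorm f * (ρ * B.rank) := by
    intro hcard
    have hkey : ∀ t, |ν t * (Sig t - Sig 0)|
        ≤ ν t * (400 * supNorm f * (ρ * B.rank) * (Nat.card B.toSet : ℝ)) := by
      intro t
      by_cases hνt : ν t = 0
      · simp [hνt]
      have htmem : t ∈ (B.dilate ρ).toSet := by
        by_contra h
        exact hνt (hνsupp t h)
      obtain ⟨i1, i2, i3, i4⟩ := inclusions B ρ hρ0.le hne t htmem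
      set L := (B.dilate (1-ρ)).toSet.toFinset with hL
      set U := (B.dilate (1+ρ)).toSet.toFinset with hU
      set S0 := B.toSet.toFinset with hS0
      set St := S0.map (Equiv.subRight t).toEmbedding with hSt
      have hLS0 : L ⊆ S0 := fun u hu => by
        rw [Set.mem_toFinset] at *; exact i1 hu
      have hS0U : S0 ⊆ U := fun u hu => by
        rw [Set.mem_toFinset] at *; exact i2 hu
      have hLSt : L ⊆ St := by
        intro u hu
        rw [Finset.mem_map_equiv]
        rw [Set.mem_toFinset] at *
        simp only [Equiv.subRight_symm_apply]
        exact i3 u hu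
      have hStU : St ⊆ U := by
        intro u hu
        rw [Finset.mem_map_equiv] at hu
        rw [Set.mem_toFinset] at *
        simp only [Equiv.subRight_symm_apply] at hu
        exact i4 u hu
      have hStsum : Sig t = ∑ u ∈ St, f u := by
        rw [hSt, Finset.sum_map]
        refine Finset.sum_congr rfl fun x _ => ?_
        simp [Equiv.subRight]
      have est1 : |Sig t - ∑ x ∈ L, f x| ≤ supNorm f * ((U.card : ℝ) - L.card) := by
        rw [hStsum]
        exact sum_sandwich f _ hsup hLSt hStU
      have est2 : |Sig 0 - ∑ x ∈ L, f x| ≤ supNorm f * ((U.card : ℝ) - L.card) := by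
        rw [hSig0]
        exact sum_sandwich f _ hsup hLS0 hS0U
      have hUL : (U.card : ℝ) - L.card ≤ 200 * (ρ * B.rank) * (Nat.card B.toSet : ℝ) := by
        have h1 : ((Nat.card (B.dilate (1+ρ)).toSet : ℕ) : ℝ) = (U.card : ℝ) := by
          rw [nat_card_set]
        have h2 : ((Nat.card (B.dilate (1-ρ)).toSet : ℕ) : ℝ) = (L.card : ℝ) := by
          rw [nat_card_set]
        rw [← h1, ← h2]
        exact hcard
      have habs : |Sig t - Sig 0| ≤ 400 * supNorm f * (ρ * B.rank) * (Nat.card B.toSet : ℝ) := by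
        have h3 : |Sig t - Sig 0| ≤ 2 * (supNorm f * ((U.card : ℝ) - L.card)) := by
          have := abs_sub_abs_le_abs_sub (Sig t) (Sig 0)
          calc |Sig t - Sig 0|
              = |(Sig t - ∑ x ∈ L, f x) - (Sig 0 - ∑ x ∈ L, f x)| := by ring_nf
            _ ≤ |Sig t - ∑ x ∈ L, f x| + |Sig 0 - ∑ x ∈ L, f x| := abs_sub _ _
            _ ≤ 2 * (supNorm f * ((U.card : ℝ) - L.card)) := by linarith
        calc |Sig t - Sig 0| ≤ 2 * (supNorm f * ((U.card : ℝ) - L.card)) := h3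
          _ ≤ 2 * (supNorm f * (200 * (ρ * B.rank) * (Nat.card B.toSet : ℝ))) := by
              apply mul_le_mul_of_nonneg_left _ (by norm_num)
              exact mul_le_mul_of_nonneg_left hUL hsup0
          _ = 400 * supNorm f * (ρ * B.rank) * (Nat.card B.toSet : ℝ) := by ring
      rw [abs_mul, abs_of_nonneg (hν0 t)]
      exact mul_le_mul_of_nonneg_left habs (hν0 t)
    rw [hdiff, abs_div, abs_of_pos hnK]
    rw [div_le_iff₀ hnK]
    calc |∑ t, ν t * (Sig t - Sig 0)|
        ≤ ∑ t, |ν t * (Sig t - Sig 0)| := Finset.abs_sum_le_sum_abs _ _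
      _ ≤ ∑ t, ν t * (400 * supNorm f * (ρ * B.rank) * (Nat.card B.toSet : ℝ)) :=
          Finset.sum_le_sum fun t _ => hkey t
      _ = (∑ t, ν t) * (400 * supNorm f * (ρ * B.rank) * (Nat.card B.toSet : ℝ)) := by
          rw [← Finset.sum_mul]
      _ = 400 * supNorm f * (ρ * B.rank) * ((Fintype.card G : ℝ) * (Nat.card B.toSet : ℝ)) := by
          rw [hνsum]; ring
  by_cases hr0 : B.rank = 0
  · apply main
    have hfreq : B.freq = ∅ := Finset.card_eq_zero.mp hr0
    have huniv : ∀ a : ℝ, (B.dilate a).toSet = Set.univ := by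
      intro a
      ext x
      simp [BohrSet.toSet, BohrSet.dilate, hfreq]
    rw [huniv, huniv]
    have : (0:ℝ) ≤ 200 * (ρ * B.rank) * (Nat.card B.toSet : ℝ) := by positivity
    linarith
  by_cases hρr : ρ ≤ 1 / (100 * (B.rank : ℝ))
  · apply main
    obtain ⟨h1, h2⟩ := hreg ρ hρ0.le hρr
    nlinarith [hK0]
  -- trivial bound case
  have hgen : ∀ g : G → ℝ, (∀ x, |g x| ≤ supNorm f) → |inprod g B.mu| ≤ supNorm f := by
    intro g hg
    rw [hmu, abs_div, abs_of_pos hK0, div_le_iff₀ hK0]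
    have hKcard : (Nat.card B.toSet : ℝ) = (B.toSet.toFinset.card : ℝ) := by
      rw [nat_card_set]
    calc |∑ x ∈ B.toSet.toFinset, g x| ≤ ∑ x ∈ B.toSet.toFinset, |g x| :=
          Finset.abs_sum_le_sum_abs _ _
      _ ≤ ∑ _x ∈ B.toSet.toFinset, supNorm f := Finset.sum_le_sum fun x _ => hg x
      _ = (B.toSet.toFinset.card : ℝ) * supNorm f := by
          rw [Finset.sum_const, nsmul_eq_mul]
      _ = supNorm f * (Nat.card B.toSet : ℝ) := by rw [hKcard]; ring
  have hcb : ∀ x, |conv f ν x| ≤ supNorm f := by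
    intro x
    have hsub : ∑ y, ν (x - y) = ∑ t, ν t := by
      exact Fintype.sum_equiv (Equiv.subLeft x) _ _ fun y => by simp [Equiv.subLeft]
    unfold conv expect
    rw [abs_div, abs_of_pos hn, div_le_iff₀ hn]
    calc |∑ y, f y * ν (x - y)| ≤ ∑ y, |f y * ν (x - y)| := Finset.abs_sum_le_sum_abs _ _
      _ ≤ ∑ y, supNorm f * ν (x - y) := by
          refine Finset.sum_le_sum fun y _ => ?_
          rw [abs_mul, abs_of_nonneg (hν0 _)]
          exact mul_le_mul_of_nonneg_right (hsup y) (hν0 _)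
      _ = supNorm f * ∑ y, ν (x - y) := by rw [Finset.mul_sum]
      _ = supNorm f * (Fintype.card G : ℝ) := by rw [hsub, hνsum]
  have hb1 : |inprod f B.mu| ≤ supNorm f := hgen f hsup
  have hb2 : |inprod (conv f ν) B.mu| ≤ supNorm f := hgen (conv f ν) hcb
  have hrr : (1:ℝ) ≤ (B.rank : ℝ) := by
    exact_mod_cast Nat.one_le_iff_ne_zero.mpr hr0
  have hρr' : 1 / (100 * (B.rank : ℝ)) < ρ := lt_of_not_ge hρr
  have h100 : (1:ℝ)/100 < ρ * B.rank := by
    rw [div_lt_iff₀ (by positivity : (0:ℝ) < 100 * (B.rank : ℝ))] at hρr'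
    nlinarith
  calc |inprod (conv f ν) B.mu - inprod f B.mu|
      ≤ |inprod (conv f ν) B.mu| + |inprod f B.mu| := abs_sub _ _
    _ ≤ 2 * supNorm f := by linarith
    _ ≤ 400 * supNorm f * (ρ * B.rank) := by nlinarith

end SkewPaper
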